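/- Let (R, +, 0, ×, 1, ≤) be a partially ordered unital nonassociative ring with 1 ≥ 0 that is monotone σ-complete. Suppose every x in (0,1] has a right-sup-almost-inverse, and inf_n {x^{→n}} = 0 for every x ∈ [0,1). Then for every x ∈ [0,1), the supremum S(x) := sup_n { Σ_{k=0}^n x^{→k} } exists. -/

import Mathlib

/-- Right powers in a nonassociative ring: `x^{→0} = 1`, `x^{→(n+1)} = x * x^{→n}`. -/
def rpow {R : Type*} [NonAssocRing R] (x : R) : ℕ → R
  | 0 => 1
  | n + 1 => x * rpow x n

/-- In a partially ordered unital nonassociative ring with `1 ≥ 0`, monotone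
σ-complete, in which every `x ∈ (0,1]` has a right-sup-almost-inverse and
`inf_n x^{→n} = 0` for every `x ∈ [0,1)`, the supremum of the partial sums
`Σ_{k=0}^n x^{→k}` exists for every `x ∈ [0,1)`. -/
theorem stmt_10 {R : Type*} [NonAssocRing R] [PartialOrder R]
    (horder_add : ∀ a y z : R, y ≤ z → a + y ≤ a + z)
    (horder_mul : ∀ y z : R, 0 ≤ y → 0 ≤ z → 0 ≤ y * z)
    (h01 : (0 : R) ≤ 1)
    (hσ : ∀ u : ℕ → R, Monotone u → (∃ b : R, ∀ n, u n ≤ b) →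
      ∃ s : R, IsLUB (Set.range u) s)
    (hrai : ∀ x : R, 0 < x → x ≤ 1 → ∃ y : R, 0 < y ∧ 1 ≤ x * y)
    (hinf : ∀ x : R, 0 ≤ x → x < 1 → IsGLB (Set.range (rpow x)) 0) :
    ∀ x : R, 0 ≤ x → x < 1 →
      ∃ s : R, IsLUB (Set.range (fun n => ∑ k ∈ Finset.range (n + 1), rpow x k)) s := by
  intro x hx0 hx1
  -- powers are nonnegative
  have hrp : ∀ n, (0 : R) ≤ rpow x n := by
    intro n
    induction n with
    | zero => exact h01
    | succ n ih => exact horder_mul _ _ hx0 ih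
  -- left multiplication by x is monotone
  have hmul_mono : ∀ a b : R, a ≤ b → x * a ≤ x * b := by
    intro a b hab
    have h1 : (0 : R) ≤ b - a := by
      have := horder_add (-a) a b hab
      simpa [neg_add_cancel, ← sub_eq_neg_add] using this
    have h2 : (0 : R) ≤ x * b - x * a := by
      have := horder_mul x (b - a) hx0 h1
      rwa [mul_sub] at this
    have := horder_add (x * a) 0 (x * b - x * a) h2
    simpa using this
  -- get the almost inverse of 1 - x
  have h1x_pos : (0 : R) < 1 - x := by
    have hle : (0 : R) ≤ 1 - x := by
      have := horder_add (-x) x 1 hx1.le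
      simpa [neg_add_cancel, ← sub_eq_neg_add] using this
    refine lt_of_le_of_ne hle ?_
    intro h
    exact hx1.ne (sub_eq_zero.mp h.symm).symm
  have h1x_le : (1 : R) - x ≤ 1 := by
    have := horder_add (1 - x) 0 x hx0
    simpa [sub_add_cancel] using this
  obtain ⟨y, hy0, hy1⟩ := hrai (1 - x) h1x_pos h1x_le
  -- 1 + x*y ≤ y
  have hkey0 : (1 : R) + x * y ≤ y := by
    have h1 : (1 : R) ≤ y - x * y := by rwa [sub_mul, one_mul] at hy1
    have := horder_add (x * y) 1 (y - x * y) h1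
    have h2 : x * y + (y - x * y) = y := by abel
    calc (1 : R) + x * y = x * y + 1 := by rw [add_comm]
      _ ≤ x * y + (y - x * y) := this
      _ = y := h2
  -- the iterates of left multiplication by x applied to y
  set f : ℕ → R := fun n => (fun a => x * a)^[n] y with hf
  have hfsucc : ∀ n, f (n + 1) = x * f n := by
    intro n
    simp only [hf, Function.iterate_succ_apply']
  have hfnonneg : ∀ n, (0 : R) ≤ f n := by
    intro n
    induction n with
    | zero => exact hy0.le
    | succ n ih => rw [hfsucc]; exact horder_mul _ _ hx0 ih
  have hkey : ∀ n, rpow x n + f (n + 1) ≤ f n := by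
    intro n
    induction n with
    | zero =>
      simpa [hf, rpow] using hkey0
    | succ n ih =>
      have := hmul_mono _ _ ih
      rw [mul_add] at this
      simpa [rpow, hfsucc] using this
  set S : ℕ → R := fun n => ∑ k ∈ Finset.range (n + 1), rpow x k with hS
  have hSsucc : ∀ n, S (n + 1) = S n + rpow x (n + 1) := by
    intro n; simp [hS, Finset.sum_range_succ]
  -- S n + f (n+1) ≤ y
  have hbound' : ∀ n, S n + f (n + 1) ≤ y := by
    intro n
    induction n with
    | zero =>
      simpa [hS, Finset.sum_range_one, show f 0 = y from rfl] using hkey 0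
    | succ n ih =>
      have h1 : S (n + 1) + f (n + 2) = S n + (rpow x (n + 1) + f (n + 2)) := by
        rw [hSsucc, add_assoc]
      calc S (n + 1) + f (n + 2) = S n + (rpow x (n + 1) + f (n + 2)) := h1
        _ ≤ S n + f (n + 1) := horder_add _ _ _ (hkey (n + 1))
        _ ≤ y := ih
  have hbound : ∀ n, S n ≤ y := by
    intro n
    calc S n = S n + 0 := by rw [add_zero]
      _ ≤ S n + f (n + 1) := horder_add _ _ _ (hfnonneg (n + 1))
      _ ≤ y := hbound' n
  have hmono : Monotone S := by
    apply monotone_nat_of_le_succ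
    intro n
    calc S n = S n + 0 := by rw [add_zero]
      _ ≤ S n + rpow x (n + 1) := horder_add _ _ _ (hrp (n + 1))
      _ = S (n + 1) := (hSsucc n).symm
  exact hσ S hmono ⟨y, hbound⟩
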